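/- Let {(Xᵢ,Yᵢ)}_{i=1}^n be i.i.d. with joint pmf p_{XY} on a product of finite alphabets 𝒳 × 𝒴, let ε, ε' > 0 and b₁ > b₀ > 0, and suppose ℙ[ f(Yⁿ) > ε' or f(Xⁿ,Yⁿ) > ε' ] ≤ 2^{−n b₁ ε}. Then ℙ[ (Xⁿ,Yⁿ) ∉ 𝒜̂_{ε,ε'}^{(n)}(X,Y) ] ≤ e^{n C_X^{(1)}(ε)} + e^{n C_X^{(2)}(ε)} + 2^{−n b₁ ε} + 2^{−n (b₁ − b₀) ε}. -/

import Mathlib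

open Finset Real
open scoped Classical BigOperators

/-- Shannon entropy (in bits) of a pmf on a finite alphabet, with the convention `0 log 0 = 0`. -/
noncomputable def shannonEntropy {W : Type*} [Fintype W] (q : W → ℝ) : ℝ :=
  - ∑ w, q w * Real.logb 2 (q w)

/-- Probability of an i.i.d. sequence: `p(wⁿ) = ∏ᵢ p(wᵢ)`. -/
noncomputable def seqProb {W : Type*} (q : W → ℝ) {n : ℕ} (w : Fin n → W) : ℝ :=
  ∏ i, q (w i)

/-- The deviation `f(wⁿ) = |−(1/n) log₂ p(wⁿ) − H(W)|` of the empirical entropy. -/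
noncomputable def fdev {W : Type*} [Fintype W] (q : W → ℝ) {n : ℕ} (w : Fin n → W) : ℝ :=
  |(-(1 / (n : ℝ))) * Real.logb 2 (seqProb q w) - shannonEntropy q|

/-- Chernoff exponent `C_W^{(1)}(ε) = inf_{s>0} ( ln 𝔼[q(W)^{−s/ln 2}] − s(H(W)+ε) )`. -/
noncomputable def chernoff1 {W : Type*} [Fintype W] (q : W → ℝ) (ε : ℝ) : ℝ :=
  sInf ((fun s : ℝ =>
    Real.log (∑ w ∈ Finset.univ.filter (fun w => 0 < q w), q w ^ (1 - s / Real.log 2))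
      - s * (shannonEntropy q + ε)) '' Set.Ioi 0)

/-- Chernoff exponent `C_W^{(2)}(ε) = inf_{s>0} ( ln 𝔼[q(W)^{s/ln 2}] − s(−H(W)+ε) )`. -/
noncomputable def chernoff2 {W : Type*} [Fintype W] (q : W → ℝ) (ε : ℝ) : ℝ :=
  sInf ((fun s : ℝ =>
    Real.log (∑ w ∈ Finset.univ.filter (fun w => 0 < q w), q w ^ (1 + s / Real.log 2))
      - s * (-shannonEntropy q + ε)) '' Set.Ioi 0)

/-- Marginal on the first component of a joint pmf. -/
noncomputable def margFst {X Y : Type*} [Fintype Y] (p : X × Y → ℝ) (x : X) : ℝ :=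
  ∑ y, p (x, y)

/-- Marginal on the second component of a joint pmf. -/
noncomputable def margSnd {X Y : Type*} [Fintype X] (p : X × Y → ℝ) (y : Y) : ℝ :=
  ∑ x, p (x, y)

/-- The sequence of pairs associated to a pair of sequences. -/
def pairSeq {X Y : Type*} {n : ℕ} (w : (Fin n → X) × (Fin n → Y)) : Fin n → X × Y :=
  fun i => (w.1 i, w.2 i)

/-- Joint probability `p(xⁿ,yⁿ) = ∏ᵢ p(xᵢ,yᵢ)` of a pair of i.i.d. sequences. -/
noncomputable def jointSeqProb {X Y : Type*} (p : X × Y → ℝ) {n : ℕ}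
    (w : (Fin n → X) × (Fin n → Y)) : ℝ :=
  ∏ i, p (w.1 i, w.2 i)

/-- The typical set `𝒜_{ε,ε'}^{(n)}(X,Y)`: `f(xⁿ) ≤ ε`, `f(yⁿ) ≤ ε'`, `f(xⁿ,yⁿ) ≤ ε'`. -/
def typical {X Y : Type*} [Fintype X] [Fintype Y] (p : X × Y → ℝ)
    (ε ε' : ℝ) {n : ℕ} (w : (Fin n → X) × (Fin n → Y)) : Prop :=
  fdev (margFst p) w.1 ≤ ε ∧ fdev (margSnd p) w.2 ≤ ε' ∧ fdev p (pairSeq w) ≤ ε'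

/-- Conditional probability `ℙ[ (Xⁿ,Yⁿ) ∉ 𝒜_{ε,ε'}^{(n)}(X,Y) | Xⁿ = xⁿ ]`
(for `xⁿ` with `p(xⁿ) > 0`). -/
noncomputable def condNotTyp {X Y : Type*} [Fintype X] [Fintype Y] (p : X × Y → ℝ)
    (ε ε' : ℝ) {n : ℕ} (xn : Fin n → X) : ℝ :=
  (∑ yn ∈ Finset.univ.filter (fun yn : Fin n → Y => ¬ typical p ε ε' (xn, yn)),
      jointSeqProb p (xn, yn)) / seqProb (margFst p) xn

lemma seqProb_nonneg {W : Type*} (q : W → ℝ) (hq : ∀ x, 0 ≤ q x) {n : ℕ} (w : Fin n → W) :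
    0 ≤ seqProb q w := Finset.prod_nonneg fun _ _ => hq _

lemma sum_seqProb {X : Type*} [Fintype X] (q : X → ℝ) (n : ℕ) :
    ∑ xn : Fin n → X, seqProb q xn = (∑ x, q x) ^ n := (Fintype.sum_pow q n).symm

lemma chern_key1 {X : Type*} [Fintype X] (q : X → ℝ) (hq : ∀ x, 0 ≤ q x) (hq1 : ∑ x, q x = 1)
    (ε : ℝ) {n : ℕ} (hn : 0 < n) {s : ℝ} (hs : 0 < s) :
    ∑ xn ∈ Finset.univ.filter (fun xn : Fin n → X =>
        ε < -(1/(n:ℝ)) * Real.logb 2 (seqProb q xn) - shannonEntropy q),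
      seqProb q xn
    ≤ Real.exp ((n:ℝ) * (Real.log (∑ w ∈ Finset.univ.filter (fun w => 0 < q w),
        q w ^ (1 - s / Real.log 2)) - s * (shannonEntropy q + ε))) := by
  have hn' : (0:ℝ) < n := Nat.cast_pos.mpr hn
  set H := shannonEntropy q with hH
  have hlog2 : (0:ℝ) < Real.log 2 := Real.log_pos (by norm_num)
  set θ := s / Real.log 2 with hθdef
  have hθ : 0 < θ := div_pos hs hlog2
  set r : X → ℝ := fun x => if 0 < q x then q x ^ (1 - θ) else 0 with hr
  have hrnn : ∀ x, 0 ≤ r x := by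
    intro x; rw [hr]; dsimp only
    split
    · exact Real.rpow_nonneg (hq x) _
    · exact le_refl 0
  have hSeq : ∑ w ∈ Finset.univ.filter (fun w => 0 < q w), q w ^ (1 - θ) = ∑ x, r x := by
    rw [Finset.sum_filter]
  rw [hSeq]
  set S := ∑ x, r x with hS
  have hSpos : 0 < S := by
    obtain ⟨x₀, -, hx₀⟩ := Finset.exists_ne_zero_of_sum_ne_zero (by rw [hq1]; norm_num :
      ∑ x : X, q x ≠ 0)
    have hx₀' : 0 < q x₀ := (hq x₀).lt_of_ne (Ne.symm hx₀)
    have h1 : 0 < r x₀ := by rw [hr]; dsimp only; rw [if_pos hx₀']; exact Real.rpow_pos_of_pos hx₀' _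
    exact lt_of_lt_of_le h1 (Finset.single_le_sum (fun x _ => hrnn x) (Finset.mem_univ x₀))
  set c : ℝ := -((n:ℝ) * s * (H + ε)) with hc
  -- restrict to positive seqProb
  have hrestrict : ∑ xn ∈ Finset.univ.filter (fun xn : Fin n → X =>
        ε < -(1/(n:ℝ)) * Real.logb 2 (seqProb q xn) - H), seqProb q xn
      = ∑ xn ∈ (Finset.univ.filter (fun xn : Fin n → X =>
        ε < -(1/(n:ℝ)) * Real.logb 2 (seqProb q xn) - H)).filter
          (fun xn => 0 < seqProb q xn), seqProb q xn := by
    refine (Finset.sum_filter_of_ne ?_).symm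
    intro xn _ hne
    exact (seqProb_nonneg q hq xn).lt_of_ne (Ne.symm hne)
  rw [hrestrict]
  have hkey : ∀ xn ∈ (Finset.univ.filter (fun xn : Fin n → X =>
        ε < -(1/(n:ℝ)) * Real.logb 2 (seqProb q xn) - H)).filter
          (fun xn => 0 < seqProb q xn),
      seqProb q xn ≤ Real.exp c * ∏ i, r (xn i) := by
    intro xn hxn
    rw [Finset.mem_filter, Finset.mem_filter] at hxn
    obtain ⟨⟨-, hA⟩, hP⟩ := hxn
    set P := seqProb q xn with hPdef
    have hqi : ∀ i, 0 < q (xn i) := by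
      intro i
      refine (hq (xn i)).lt_of_ne fun h => hP.ne' ?_
      exact Finset.prod_eq_zero (Finset.mem_univ i) h.symm
    have hL : Real.logb 2 P < -((n:ℝ) * (H + ε)) := by
      have h1 : (1/(n:ℝ)) * Real.logb 2 P < -(H + ε) := by linarith
      calc Real.logb 2 P = (n:ℝ) * ((1/(n:ℝ)) * Real.logb 2 P) := by field_simp
        _ < (n:ℝ) * (-(H + ε)) := by exact (mul_lt_mul_iff_right₀ hn').mpr h1
        _ = -((n:ℝ) * (H + ε)) := by ring
    have hPt : P < (2:ℝ) ^ (-((n:ℝ) * (H + ε))) :=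
      (Real.logb_lt_iff_lt_rpow (by norm_num) hP).mp hL
    have e1 : P = P ^ (1 - θ) * P ^ θ := by
      rw [← Real.rpow_add hP, sub_add_cancel, Real.rpow_one]
    have e2 : P ^ θ ≤ ((2:ℝ) ^ (-((n:ℝ) * (H + ε)))) ^ θ :=
      Real.rpow_le_rpow hP.le hPt.le hθ.le
    have e3 : ((2:ℝ) ^ (-((n:ℝ) * (H + ε)))) ^ θ = Real.exp c := by
      rw [← Real.rpow_mul (by norm_num : (0:ℝ) ≤ 2),
        Real.rpow_def_of_pos (by norm_num : (0:ℝ) < 2)]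
      congr 1
      rw [hθdef, hc]
      field_simp
    have e4 : P ^ (1 - θ) = ∏ i, r (xn i) := by
      have e5 : ∏ i, r (xn i) = ∏ i, q (xn i) ^ (1 - θ) :=
        Finset.prod_congr rfl fun i _ => by rw [hr]; dsimp only; rw [if_pos (hqi i)]
      rw [e5, Real.finset_prod_rpow _ _ (fun i _ => (hq (xn i))) _]
      rfl
    calc P = P ^ (1 - θ) * P ^ θ := e1
      _ ≤ P ^ (1 - θ) * Real.exp c := by
          rw [← e3]
          exact mul_le_mul_of_nonneg_left e2 (Real.rpow_nonneg hP.le _)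
      _ = Real.exp c * ∏ i, r (xn i) := by rw [e4]; ring
  calc ∑ xn ∈ (Finset.univ.filter (fun xn : Fin n → X =>
        ε < -(1/(n:ℝ)) * Real.logb 2 (seqProb q xn) - H)).filter
          (fun xn => 0 < seqProb q xn), seqProb q xn
      ≤ ∑ xn ∈ (Finset.univ.filter (fun xn : Fin n → X =>
        ε < -(1/(n:ℝ)) * Real.logb 2 (seqProb q xn) - H)).filter
          (fun xn => 0 < seqProb q xn), Real.exp c * ∏ i, r (xn i) :=
        Finset.sum_le_sum hkey
    _ ≤ ∑ xn : Fin n → X, Real.exp c * ∏ i, r (xn i) := by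
        refine Finset.sum_le_sum_of_subset_of_nonneg (Finset.subset_univ _) ?_
        intro xn _ _
        exact mul_nonneg (Real.exp_pos c).le (Finset.prod_nonneg fun i _ => hrnn _)
    _ = Real.exp c * S ^ n := by
        rw [← Finset.mul_sum, Fintype.sum_pow r n]
    _ = Real.exp ((n:ℝ) * (Real.log S - s * (H + ε))) := by
        rw [← Real.exp_log hSpos, ← Real.exp_nat_mul, ← Real.exp_add]
        congr 1
        rw [Real.exp_log hSpos, hc]
        ring

lemma chern_key2 {X : Type*} [Fintype X] (q : X → ℝ) (hq : ∀ x, 0 ≤ q x) (hq1 : ∑ x, q x = 1)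
    (ε : ℝ) {n : ℕ} (hn : 0 < n) {s : ℝ} (hs : 0 < s) :
    ∑ xn ∈ Finset.univ.filter (fun xn : Fin n → X =>
        ε < -(-(1/(n:ℝ)) * Real.logb 2 (seqProb q xn) - shannonEntropy q)),
      seqProb q xn
    ≤ Real.exp ((n:ℝ) * (Real.log (∑ w ∈ Finset.univ.filter (fun w => 0 < q w),
        q w ^ (1 + s / Real.log 2)) - s * (-shannonEntropy q + ε))) := by
  have hn' : (0:ℝ) < n := Nat.cast_pos.mpr hn
  set H := shannonEntropy q with hH
  have hlog2 : (0:ℝ) < Real.log 2 := Real.log_pos (by norm_num)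
  set θ := s / Real.log 2 with hθdef
  have hθ : 0 < θ := div_pos hs hlog2
  set r : X → ℝ := fun x => if 0 < q x then q x ^ (1 + θ) else 0 with hr
  have hrnn : ∀ x, 0 ≤ r x := by
    intro x; rw [hr]; dsimp only
    split
    · exact Real.rpow_nonneg (hq x) _
    · exact le_refl 0
  have hSeq : ∑ w ∈ Finset.univ.filter (fun w => 0 < q w), q w ^ (1 + θ) = ∑ x, r x := by
    rw [Finset.sum_filter]
  rw [hSeq]
  set S := ∑ x, r x with hS
  have hSpos : 0 < S := by
    obtain ⟨x₀, -, hx₀⟩ := Finset.exists_ne_zero_of_sum_ne_zero (by rw [hq1]; norm_num :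
      ∑ x : X, q x ≠ 0)
    have hx₀' : 0 < q x₀ := (hq x₀).lt_of_ne (Ne.symm hx₀)
    have h1 : 0 < r x₀ := by rw [hr]; dsimp only; rw [if_pos hx₀']; exact Real.rpow_pos_of_pos hx₀' _
    exact lt_of_lt_of_le h1 (Finset.single_le_sum (fun x _ => hrnn x) (Finset.mem_univ x₀))
  set c : ℝ := -((n:ℝ) * s * (-H + ε)) with hc
  have hrestrict : ∑ xn ∈ Finset.univ.filter (fun xn : Fin n → X =>
        ε < -(-(1/(n:ℝ)) * Real.logb 2 (seqProb q xn) - H)), seqProb q xn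
      = ∑ xn ∈ (Finset.univ.filter (fun xn : Fin n → X =>
        ε < -(-(1/(n:ℝ)) * Real.logb 2 (seqProb q xn) - H))).filter
          (fun xn => 0 < seqProb q xn), seqProb q xn := by
    refine (Finset.sum_filter_of_ne ?_).symm
    intro xn _ hne
    exact (seqProb_nonneg q hq xn).lt_of_ne (Ne.symm hne)
  rw [hrestrict]
  have hkey : ∀ xn ∈ (Finset.univ.filter (fun xn : Fin n → X =>
        ε < -(-(1/(n:ℝ)) * Real.logb 2 (seqProb q xn) - H))).filter
          (fun xn => 0 < seqProb q xn),
      seqProb q xn ≤ Real.exp c * ∏ i, r (xn i) := by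
    intro xn hxn
    rw [Finset.mem_filter, Finset.mem_filter] at hxn
    obtain ⟨⟨-, hA⟩, hP⟩ := hxn
    set P := seqProb q xn with hPdef
    have hqi : ∀ i, 0 < q (xn i) := by
      intro i
      refine (hq (xn i)).lt_of_ne fun h => hP.ne' ?_
      exact Finset.prod_eq_zero (Finset.mem_univ i) h.symm
    have hL : ((n:ℝ) * (ε - H)) < Real.logb 2 P := by
      have h1 : ε - H < (1/(n:ℝ)) * Real.logb 2 P := by linarith
      calc (n:ℝ) * (ε - H) < (n:ℝ) * ((1/(n:ℝ)) * Real.logb 2 P) :=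
            (mul_lt_mul_iff_right₀ hn').mpr h1
        _ = Real.logb 2 P := by field_simp
    have hPt : (2:ℝ) ^ ((n:ℝ) * (ε - H)) < P :=
      (Real.lt_logb_iff_rpow_lt (by norm_num) hP).mp hL
    have htpos : (0:ℝ) < (2:ℝ) ^ ((n:ℝ) * (ε - H)) := Real.rpow_pos_of_pos (by norm_num) _
    have e1 : P = P ^ (1 + θ) * P ^ (-θ) := by
      rw [← Real.rpow_add hP]
      norm_num
    have e2 : P ^ (-θ) ≤ ((2:ℝ) ^ ((n:ℝ) * (ε - H))) ^ (-θ) :=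
      Real.rpow_le_rpow_of_nonpos htpos hPt.le (by linarith)
    have e3 : ((2:ℝ) ^ ((n:ℝ) * (ε - H))) ^ (-θ) = Real.exp c := by
      rw [← Real.rpow_mul (by norm_num : (0:ℝ) ≤ 2),
        Real.rpow_def_of_pos (by norm_num : (0:ℝ) < 2)]
      congr 1
      rw [hθdef, hc]
      field_simp
      ring
    have e4 : P ^ (1 + θ) = ∏ i, r (xn i) := by
      have e5 : ∏ i, r (xn i) = ∏ i, q (xn i) ^ (1 + θ) :=
        Finset.prod_congr rfl fun i _ => by rw [hr]; dsimp only; rw [if_pos (hqi i)]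
      rw [e5, Real.finset_prod_rpow _ _ (fun i _ => (hq (xn i))) _]
      rfl
    calc P = P ^ (1 + θ) * P ^ (-θ) := e1
      _ ≤ P ^ (1 + θ) * Real.exp c := by
          rw [← e3]
          exact mul_le_mul_of_nonneg_left e2 (Real.rpow_nonneg hP.le _)
      _ = Real.exp c * ∏ i, r (xn i) := by rw [e4]; ring
  calc ∑ xn ∈ (Finset.univ.filter (fun xn : Fin n → X =>
        ε < -(-(1/(n:ℝ)) * Real.logb 2 (seqProb q xn) - H))).filter
          (fun xn => 0 < seqProb q xn), seqProb q xn
      ≤ ∑ xn ∈ (Finset.univ.filter (fun xn : Fin n → X =>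
        ε < -(-(1/(n:ℝ)) * Real.logb 2 (seqProb q xn) - H))).filter
          (fun xn => 0 < seqProb q xn), Real.exp c * ∏ i, r (xn i) :=
        Finset.sum_le_sum hkey
    _ ≤ ∑ xn : Fin n → X, Real.exp c * ∏ i, r (xn i) := by
        refine Finset.sum_le_sum_of_subset_of_nonneg (Finset.subset_univ _) ?_
        intro xn _ _
        exact mul_nonneg (Real.exp_pos c).le (Finset.prod_nonneg fun i _ => hrnn _)
    _ = Real.exp c * S ^ n := by
        rw [← Finset.mul_sum, Fintype.sum_pow r n]
    _ = Real.exp ((n:ℝ) * (Real.log S - s * (-H + ε))) := by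
        rw [← Real.exp_log hSpos, ← Real.exp_nat_mul, ← Real.exp_add]
        congr 1
        rw [Real.exp_log hSpos, hc]
        ring

lemma le_exp_nsInf {A : ℝ} (hA0 : 0 ≤ A) {n : ℕ} (hn : 0 < n) (g : ℝ → ℝ)
    (key : ∀ s, 0 < s → A ≤ Real.exp ((n:ℝ) * g s)) :
    A ≤ Real.exp ((n:ℝ) * sInf (g '' Set.Ioi 0)) := by
  rcases hA0.eq_or_lt with h | hpos
  · exact h ▸ (Real.exp_pos _).le
  · have hn' : (0:ℝ) < n := Nat.cast_pos.mpr hn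
    set L := Real.log A / n with hL
    have hlb : ∀ v ∈ g '' Set.Ioi 0, L ≤ v := by
      rintro v ⟨s, hs, rfl⟩
      have h1 := key s hs
      have h2 : Real.log A ≤ (n:ℝ) * g s := by
        have := Real.log_le_log hpos h1
        rwa [Real.log_exp] at this
      rw [hL, div_le_iff₀ hn']
      linarith
    have hne : (g '' Set.Ioi 0).Nonempty := ⟨g 1, 1, by norm_num, rfl⟩
    have hle : L ≤ sInf (g '' Set.Ioi 0) := le_csInf hne hlb
    have hA : A = Real.exp ((n:ℝ) * L) := by
      rw [show (n:ℝ) * L = Real.log A by rw [hL]; field_simp]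
      exact (Real.exp_log hpos).symm
    rw [hA]
    exact Real.exp_le_exp.mpr (mul_le_mul_of_nonneg_left hle hn'.le)

lemma chern_bound1 {X : Type*} [Fintype X] (q : X → ℝ) (hq : ∀ x, 0 ≤ q x)
    (hq1 : ∑ x, q x = 1) (ε : ℝ) (n : ℕ) :
    ∑ xn ∈ Finset.univ.filter (fun xn : Fin n → X =>
        ε < -(1/(n:ℝ)) * Real.logb 2 (seqProb q xn) - shannonEntropy q),
      seqProb q xn ≤ Real.exp ((n:ℝ) * chernoff1 q ε) := by
  rcases Nat.eq_zero_or_pos n with rfl | hn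
  · simp only [Nat.cast_zero, zero_mul, Real.exp_zero]
    have h := Finset.sum_le_sum_of_subset_of_nonneg
      (Finset.subset_univ (Finset.univ.filter (fun xn : Fin 0 → X =>
        ε < -(1/((0:ℕ):ℝ)) * Real.logb 2 (seqProb q xn) - shannonEntropy q)))
      (fun xn _ _ => seqProb_nonneg q hq xn)
    rw [sum_seqProb, hq1, one_pow] at h
    simpa using h
  · exact le_exp_nsInf (Finset.sum_nonneg fun xn _ => seqProb_nonneg q hq xn) hn _
      (fun s hs => chern_key1 q hq hq1 ε hn hs)

lemma chern_bound2 {X : Type*} [Fintype X] (q : X → ℝ) (hq : ∀ x, 0 ≤ q x)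
    (hq1 : ∑ x, q x = 1) (ε : ℝ) (n : ℕ) :
    ∑ xn ∈ Finset.univ.filter (fun xn : Fin n → X =>
        ε < -(-(1/(n:ℝ)) * Real.logb 2 (seqProb q xn) - shannonEntropy q)),
      seqProb q xn ≤ Real.exp ((n:ℝ) * chernoff2 q ε) := by
  rcases Nat.eq_zero_or_pos n with rfl | hn
  · simp only [Nat.cast_zero, zero_mul, Real.exp_zero]
    have h := Finset.sum_le_sum_of_subset_of_nonneg
      (Finset.subset_univ (Finset.univ.filter (fun xn : Fin 0 → X =>
        ε < -(-(1/((0:ℕ):ℝ)) * Real.logb 2 (seqProb q xn) - shannonEntropy q))))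
      (fun xn _ _ => seqProb_nonneg q hq xn)
    rw [sum_seqProb, hq1, one_pow] at h
    simpa using h
  · exact le_exp_nsInf (Finset.sum_nonneg fun xn _ => seqProb_nonneg q hq xn) hn _
      (fun s hs => chern_key2 q hq hq1 ε hn hs)

lemma sum_filter_or_le {α : Type*} [Fintype α] (f : α → ℝ) (hf : ∀ a, 0 ≤ f a)
    (P Q : α → Prop) :
    ∑ a ∈ Finset.univ.filter (fun a => P a ∨ Q a), f a
      ≤ ∑ a ∈ Finset.univ.filter (fun a => P a), f a
        + ∑ a ∈ Finset.univ.filter (fun a => Q a), f a := by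
  rw [Finset.filter_or]
  have h1 := Finset.sum_union_inter (s₁ := Finset.univ.filter (fun a => P a))
    (s₂ := Finset.univ.filter (fun a => Q a)) (f := f)
  have h2 : 0 ≤ ∑ a ∈ Finset.univ.filter (fun a => P a) ∩ Finset.univ.filter (fun a => Q a),
      f a := Finset.sum_nonneg fun a _ => hf a
  linarith

lemma sum_filter_mono_pred {α : Type*} [Fintype α] (f : α → ℝ) (hf : ∀ a, 0 ≤ f a)
    (P Q : α → Prop) (h : ∀ a, P a → Q a) :
    ∑ a ∈ Finset.univ.filter (fun a => P a), f a
      ≤ ∑ a ∈ Finset.univ.filter (fun a => Q a), f a := by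
  refine Finset.sum_le_sum_of_subset_of_nonneg ?_ fun a _ _ => hf a
  intro a ha
  rw [Finset.mem_filter] at ha ⊢
  exact ⟨ha.1, h a ha.2⟩

lemma sum_joint_yn {X Y : Type*} [Fintype X] [Fintype Y] (p : X × Y → ℝ) {n : ℕ}
    (xn : Fin n → X) :
    ∑ yn : Fin n → Y, jointSeqProb p (xn, yn) = seqProb (margFst p) xn := by
  show ∑ yn : Fin n → Y, ∏ i, p (xn i, yn i) = ∏ i, ∑ y, p (xn i, y)
  exact (Fintype.prod_sum (fun i (y : Y) => p (xn i, y))).symm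

lemma sum_pairs_fst {X Y : Type*} [Fintype X] [Fintype Y] (p : X × Y → ℝ) {n : ℕ}
    (P : (Fin n → X) → Prop) :
    ∑ w ∈ Finset.univ.filter (fun w : (Fin n → X) × (Fin n → Y) => P w.1), jointSeqProb p w
      = ∑ xn ∈ Finset.univ.filter (fun xn => P xn), seqProb (margFst p) xn := by
  rw [Finset.sum_filter, Finset.sum_filter, Fintype.sum_prod_type]
  refine Finset.sum_congr rfl fun xn _ => ?_
  by_cases h : P xn
  · simp only [h, if_true]
    exact sum_joint_yn p xn
  · simp [h]


/-- With the restricted typical set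
`𝒜̂_{ε,ε'}^{(n)}(X,Y) = { (xⁿ,yⁿ) ∈ 𝒜_{ε,ε'}^{(n)} :
ℙ[ (Xⁿ,Yⁿ) ∉ 𝒜_{ε,ε'}^{(n)} | Xⁿ = xⁿ ] ≤ 2^{−n b₀ ε} }`, if
`ℙ[ f(Yⁿ) > ε' or f(Xⁿ,Yⁿ) > ε' ] ≤ 2^{−n b₁ ε}`, then
`ℙ[ (Xⁿ,Yⁿ) ∉ 𝒜̂ ] ≤ e^{n C_X^{(1)}(ε)} + e^{n C_X^{(2)}(ε)} + 2^{−n b₁ ε} + 2^{−n(b₁−b₀)ε}`. -/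
theorem prob_not_restricted_typical_bound
    {X Y : Type*} [Fintype X] [Fintype Y] (p : X × Y → ℝ)
    (hp : ∀ xy, 0 ≤ p xy) (hsum : ∑ xy, p xy = 1)
    (n : ℕ) (ε ε' b₀ b₁ : ℝ) (hε : 0 < ε) (hε' : 0 < ε') (hb₀ : 0 < b₀) (hb₁ : b₀ < b₁)
    (hhyp : ∑ w ∈ Finset.univ.filter (fun w : (Fin n → X) × (Fin n → Y) =>
          fdev (margSnd p) w.2 > ε' ∨ fdev p (pairSeq w) > ε'),
        jointSeqProb p w ≤ (2 : ℝ) ^ (-((n : ℝ) * b₁ * ε))) :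
    ∑ w ∈ Finset.univ.filter (fun w : (Fin n → X) × (Fin n → Y) =>
          ¬ (typical p ε ε' w ∧
              condNotTyp p ε ε' w.1 ≤ (2 : ℝ) ^ (-((n : ℝ) * b₀ * ε)))),
        jointSeqProb p w
      ≤ Real.exp ((n : ℝ) * chernoff1 (margFst p) ε)
        + Real.exp ((n : ℝ) * chernoff2 (margFst p) ε)
        + (2 : ℝ) ^ (-((n : ℝ) * b₁ * ε))
        + (2 : ℝ) ^ (-((n : ℝ) * (b₁ - b₀) * ε)) := by
  have hjnn : ∀ w : (Fin n → X) × (Fin n → Y), 0 ≤ jointSeqProb p w :=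
    fun w => Finset.prod_nonneg fun i _ => hp _
  have hq : ∀ x, 0 ≤ margFst p x := fun x => Finset.sum_nonneg fun y _ => hp _
  have hq1 : ∑ x, margFst p x = 1 := by
    show ∑ x, ∑ y, p (x, y) = 1
    rw [← Fintype.sum_prod_type]
    exact hsum
  set c₀ : ℝ := (2 : ℝ) ^ (-((n : ℝ) * b₀ * ε)) with hc₀
  set c₁ : ℝ := (2 : ℝ) ^ (-((n : ℝ) * b₁ * ε)) with hc₁
  set c₂ : ℝ := (2 : ℝ) ^ (-((n : ℝ) * (b₁ - b₀) * ε)) with hc₂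
  have hc₀pos : 0 < c₀ := Real.rpow_pos_of_pos (by norm_num) _
  have cover : ∀ w : (Fin n → X) × (Fin n → Y),
      ¬ (typical p ε ε' w ∧ condNotTyp p ε ε' w.1 ≤ c₀) →
      (ε < fdev (margFst p) w.1) ∨
        ((fdev (margSnd p) w.2 > ε' ∨ fdev p (pairSeq w) > ε') ∨
          (typical p ε ε' w ∧ c₀ < condNotTyp p ε ε' w.1)) := by
    intro w h
    by_cases ht : typical p ε ε' w
    · exact Or.inr (Or.inr ⟨ht, lt_of_not_ge fun hc => h ⟨ht, hc⟩⟩)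
    · rw [typical] at ht
      push_neg at ht
      by_cases h1 : fdev (margFst p) w.1 ≤ ε
      · by_cases h2 : fdev (margSnd p) w.2 ≤ ε'
        · exact Or.inr (Or.inl (Or.inr (ht h1 h2)))
        · exact Or.inr (Or.inl (Or.inl (lt_of_not_ge h2)))
      · exact Or.inl (lt_of_not_ge h1)
  -- Bound 1 : Chernoff
  have bound1 : ∑ w ∈ Finset.univ.filter
        (fun w : (Fin n → X) × (Fin n → Y) => ε < fdev (margFst p) w.1), jointSeqProb p w
      ≤ Real.exp ((n : ℝ) * chernoff1 (margFst p) ε)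
        + Real.exp ((n : ℝ) * chernoff2 (margFst p) ε) := by
    have hrw : ∑ w ∈ Finset.univ.filter
          (fun w : (Fin n → X) × (Fin n → Y) => ε < fdev (margFst p) w.1), jointSeqProb p w
        = ∑ xn ∈ Finset.univ.filter (fun xn : Fin n → X => ε < fdev (margFst p) xn),
          seqProb (margFst p) xn := by
      convert sum_pairs_fst p (fun xn : Fin n → X => ε < fdev (margFst p) xn) using 3
    rw [hrw]
    have habs : ∀ xn : Fin n → X, ε < fdev (margFst p) xn →
        (ε < -(1/(n:ℝ)) * Real.logb 2 (seqProb (margFst p) xn) - shannonEntropy (margFst p)) ∨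
        (ε < -(-(1/(n:ℝ)) * Real.logb 2 (seqProb (margFst p) xn)
            - shannonEntropy (margFst p))) := by
      intro xn h
      exact lt_abs.mp h
    calc ∑ xn ∈ Finset.univ.filter (fun xn => ε < fdev (margFst p) xn),
          seqProb (margFst p) xn
        ≤ ∑ xn ∈ Finset.univ.filter (fun xn : Fin n → X =>
            (ε < -(1/(n:ℝ)) * Real.logb 2 (seqProb (margFst p) xn)
              - shannonEntropy (margFst p)) ∨
            (ε < -(-(1/(n:ℝ)) * Real.logb 2 (seqProb (margFst p) xn)
              - shannonEntropy (margFst p)))), seqProb (margFst p) xn :=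
          by convert sum_filter_mono_pred _ (fun xn => seqProb_nonneg _ hq xn) _ _ habs using 3
      _ ≤ (∑ xn ∈ Finset.univ.filter (fun xn : Fin n → X =>
            ε < -(1/(n:ℝ)) * Real.logb 2 (seqProb (margFst p) xn)
              - shannonEntropy (margFst p)), seqProb (margFst p) xn)
          + ∑ xn ∈ Finset.univ.filter (fun xn : Fin n → X =>
            ε < -(-(1/(n:ℝ)) * Real.logb 2 (seqProb (margFst p) xn)
              - shannonEntropy (margFst p))), seqProb (margFst p) xn := by
          convert sum_filter_or_le (seqProb (margFst p))
            (fun xn => seqProb_nonneg _ hq xn)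
            (fun xn : Fin n → X =>
              ε < -(1/(n:ℝ)) * Real.logb 2 (seqProb (margFst p) xn)
                - shannonEntropy (margFst p))
            (fun xn : Fin n → X =>
              ε < -(-(1/(n:ℝ)) * Real.logb 2 (seqProb (margFst p) xn)
                - shannonEntropy (margFst p))) using 3
      _ ≤ _ := add_le_add (chern_bound1 (margFst p) hq hq1 ε n)
            (chern_bound2 (margFst p) hq hq1 ε n)
  -- Bound 3 : Markov
  have bound3 : ∑ w ∈ Finset.univ.filter
        (fun w : (Fin n → X) × (Fin n → Y) =>
          typical p ε ε' w ∧ c₀ < condNotTyp p ε ε' w.1), jointSeqProb p w ≤ c₂ := by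
    have step1 : ∑ w ∈ Finset.univ.filter
          (fun w : (Fin n → X) × (Fin n → Y) =>
            typical p ε ε' w ∧ c₀ < condNotTyp p ε ε' w.1), jointSeqProb p w
        ≤ ∑ w ∈ Finset.univ.filter
          (fun w : (Fin n → X) × (Fin n → Y) =>
            fdev (margFst p) w.1 ≤ ε ∧ c₀ < condNotTyp p ε ε' w.1), jointSeqProb p w := by
      convert sum_filter_mono_pred (jointSeqProb p) hjnn
        (fun w : (Fin n → X) × (Fin n → Y) =>
          typical p ε ε' w ∧ c₀ < condNotTyp p ε ε' w.1)
        (fun w : (Fin n → X) × (Fin n → Y) =>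
          fdev (margFst p) w.1 ≤ ε ∧ c₀ < condNotTyp p ε ε' w.1)
        (fun w hw => ⟨hw.1.1, hw.2⟩) using 3
    have step1' : ∑ w ∈ Finset.univ.filter
          (fun w : (Fin n → X) × (Fin n → Y) =>
            fdev (margFst p) w.1 ≤ ε ∧ c₀ < condNotTyp p ε ε' w.1), jointSeqProb p w
        = ∑ xn ∈ Finset.univ.filter
          (fun xn : Fin n → X => fdev (margFst p) xn ≤ ε ∧ c₀ < condNotTyp p ε ε' xn),
          seqProb (margFst p) xn := by
      convert sum_pairs_fst p
        (fun xn : Fin n → X => fdev (margFst p) xn ≤ ε ∧ c₀ < condNotTyp p ε ε' xn) using 3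
    rw [step1'] at step1
    -- per-xn Markov bound
    have step2 : ∀ xn ∈ Finset.univ.filter
          (fun xn : Fin n → X => fdev (margFst p) xn ≤ ε ∧ c₀ < condNotTyp p ε ε' xn),
        seqProb (margFst p) xn * c₀
          ≤ ∑ yn ∈ Finset.univ.filter (fun yn : Fin n → Y =>
              fdev (margSnd p) yn > ε' ∨ fdev p (pairSeq (xn, yn)) > ε'),
            jointSeqProb p (xn, yn) := by
      intro xn hxn
      rw [Finset.mem_filter] at hxn
      obtain ⟨-, hfd, hcond⟩ := hxn
      have hqx0 : 0 < seqProb (margFst p) xn := by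
        rcases (seqProb_nonneg (margFst p) hq xn).eq_or_lt with h | h
        · exfalso
          have h2 : condNotTyp p ε ε' xn = 0 := by rw [condNotTyp, ← h, div_zero]
          rw [h2] at hcond
          exact absurd hcond (not_lt.mpr hc₀pos.le)
        · exact h
      have hcond' : c₀ * seqProb (margFst p) xn
          < ∑ yn ∈ Finset.univ.filter (fun yn : Fin n → Y => ¬ typical p ε ε' (xn, yn)),
            jointSeqProb p (xn, yn) := by
        rw [condNotTyp] at hcond
        exact (lt_div_iff₀ hqx0).mp hcond
      have hNle : (∑ yn ∈ Finset.univ.filter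
            (fun yn : Fin n → Y => ¬ typical p ε ε' (xn, yn)), jointSeqProb p (xn, yn))
          ≤ ∑ yn ∈ Finset.univ.filter (fun yn : Fin n → Y =>
          fdev (margSnd p) yn > ε' ∨ fdev p (pairSeq (xn, yn)) > ε'),
          jointSeqProb p (xn, yn) := by
        refine Finset.sum_le_sum_of_subset_of_nonneg ?_ fun yn _ _ => hjnn _
        intro yn hyn
        rw [Finset.mem_filter] at hyn ⊢
        refine ⟨hyn.1, ?_⟩
        have hnt := hyn.2
        by_cases h2 : fdev (margSnd p) yn ≤ ε'
        · by_cases h3 : fdev p (pairSeq (xn, yn)) ≤ ε'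
          · exact absurd ⟨hfd, h2, h3⟩ hnt
          · exact Or.inr (lt_of_not_ge h3)
        · exact Or.inl (lt_of_not_ge h2)
      linarith
    have step3 : (∑ xn ∈ Finset.univ.filter
          (fun xn : Fin n → X => fdev (margFst p) xn ≤ ε ∧ c₀ < condNotTyp p ε ε' xn),
          seqProb (margFst p) xn) * c₀ ≤ c₁ := by
      rw [Finset.sum_mul]
      calc ∑ xn ∈ Finset.univ.filter
            (fun xn : Fin n → X => fdev (margFst p) xn ≤ ε ∧ c₀ < condNotTyp p ε ε' xn),
            seqProb (margFst p) xn * c₀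
          ≤ ∑ xn ∈ Finset.univ.filter
            (fun xn : Fin n → X => fdev (margFst p) xn ≤ ε ∧ c₀ < condNotTyp p ε ε' xn),
            ∑ yn ∈ Finset.univ.filter (fun yn : Fin n → Y =>
              fdev (margSnd p) yn > ε' ∨ fdev p (pairSeq (xn, yn)) > ε'),
            jointSeqProb p (xn, yn) := Finset.sum_le_sum step2
        _ ≤ ∑ xn : Fin n → X, ∑ yn ∈ Finset.univ.filter (fun yn : Fin n → Y =>
              fdev (margSnd p) yn > ε' ∨ fdev p (pairSeq (xn, yn)) > ε'),
            jointSeqProb p (xn, yn) := by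
            refine Finset.sum_le_sum_of_subset_of_nonneg (Finset.subset_univ _) ?_
            intro xn _ _
            exact Finset.sum_nonneg fun yn _ => hjnn _
        _ = ∑ w ∈ Finset.univ.filter (fun w : (Fin n → X) × (Fin n → Y) =>
              fdev (margSnd p) w.2 > ε' ∨ fdev p (pairSeq w) > ε'), jointSeqProb p w := by
            rw [Finset.sum_filter, Fintype.sum_prod_type]
            refine Finset.sum_congr rfl fun xn _ => ?_
            rw [Finset.sum_filter]
        _ ≤ c₁ := hhyp
    have hc₂ : c₁ / c₀ = c₂ := by
      rw [hc₀, hc₁, hc₂, ← Real.rpow_sub (by norm_num : (0:ℝ) < 2)]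
      congr 1
      ring
    calc ∑ w ∈ Finset.univ.filter
          (fun w : (Fin n → X) × (Fin n → Y) =>
            typical p ε ε' w ∧ c₀ < condNotTyp p ε ε' w.1), jointSeqProb p w
        ≤ ∑ xn ∈ Finset.univ.filter
          (fun xn : Fin n → X => fdev (margFst p) xn ≤ ε ∧ c₀ < condNotTyp p ε ε' xn),
          seqProb (margFst p) xn := step1
      _ ≤ c₁ / c₀ := (le_div_iff₀ hc₀pos).mpr step3
      _ = c₂ := hc₂
  -- final chain
  calc ∑ w ∈ Finset.univ.filter (fun w : (Fin n → X) × (Fin n → Y) =>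
          ¬ (typical p ε ε' w ∧ condNotTyp p ε ε' w.1 ≤ c₀)), jointSeqProb p w
      ≤ ∑ w ∈ Finset.univ.filter (fun w : (Fin n → X) × (Fin n → Y) =>
          (ε < fdev (margFst p) w.1) ∨
            ((fdev (margSnd p) w.2 > ε' ∨ fdev p (pairSeq w) > ε') ∨
              (typical p ε ε' w ∧ c₀ < condNotTyp p ε ε' w.1))), jointSeqProb p w :=
        by convert sum_filter_mono_pred _ hjnn _ _ cover using 3
    _ ≤ (∑ w ∈ Finset.univ.filter (fun w : (Fin n → X) × (Fin n → Y) =>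
          ε < fdev (margFst p) w.1), jointSeqProb p w)
        + ∑ w ∈ Finset.univ.filter (fun w : (Fin n → X) × (Fin n → Y) =>
            (fdev (margSnd p) w.2 > ε' ∨ fdev p (pairSeq w) > ε') ∨
              (typical p ε ε' w ∧ c₀ < condNotTyp p ε ε' w.1)), jointSeqProb p w :=
        by convert sum_filter_or_le _ hjnn _ _ using 4
    _ ≤ (∑ w ∈ Finset.univ.filter (fun w : (Fin n → X) × (Fin n → Y) =>
          ε < fdev (margFst p) w.1), jointSeqProb p w)
        + ((∑ w ∈ Finset.univ.filter (fun w : (Fin n → X) × (Fin n → Y) =>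
            fdev (margSnd p) w.2 > ε' ∨ fdev p (pairSeq w) > ε'), jointSeqProb p w)
          + ∑ w ∈ Finset.univ.filter (fun w : (Fin n → X) × (Fin n → Y) =>
              typical p ε ε' w ∧ c₀ < condNotTyp p ε ε' w.1), jointSeqProb p w) :=
        add_le_add_right (by convert sum_filter_or_le _ hjnn _ _ using 4) _
    _ ≤ (Real.exp ((n : ℝ) * chernoff1 (margFst p) ε)
          + Real.exp ((n : ℝ) * chernoff2 (margFst p) ε)) + (c₁ + c₂) :=
        add_le_add bound1 (add_le_add hhyp bound3)
    _ = _ := by ring
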